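/- For every x ∈ (0,1), the limit as |s| → ∞ of √|s|·|g(√(is),x,x)| equals 1/2; that is, for every ε > 0 there exists M > 0 such that for all real s with |s| > M, |√|s|·|g(√(is),x,x)| − 1/2| < ε. -/

import Mathlib

open MeasureTheory Set Filter
open scoped Real Topology

/-- The Green's function `g(m,x,y)` for complex parameter `m`, with
`g(0,x,y)` given by the triangular kernel. -/
noncomputable def gC (m : ℂ) (x y : ℝ) : ℂ :=
  if m = 0 then
    (((if y ≤ x then (1 - x) * y else x * (1 - y)) : ℝ) : ℂ)
  else if y ≤ x then
    -(Complex.sinh (m * ((x : ℂ) - 1)) * Complex.sinh (m * (y : ℂ))) / (m * Complex.sinh m)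
  else
    -(Complex.sinh (m * (x : ℂ)) * Complex.sinh (m * ((y : ℂ) - 1))) / (m * Complex.sinh m)

/-- `√(is) = (1+i)·√|s|/√2` for real `s`. -/
noncomputable def sqrtis (s : ℝ) : ℂ :=
  (1 + Complex.I) * (Real.sqrt |s| : ℂ) / (Real.sqrt 2 : ℂ)

lemma abs_sinh_le_cosh (z : ℂ) : ‖Complex.sinh z‖ ≤ Real.cosh z.re := by
  have h : Complex.sinh z = (Complex.exp z - Complex.exp (-z)) / 2 := by rw [Complex.sinh]
  rw [h, Real.cosh_eq, norm_div]
  simp only [Complex.norm_two]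
  gcongr
  calc ‖Complex.exp z - Complex.exp (-z)‖
      ≤ ‖Complex.exp z‖ + ‖Complex.exp (-z)‖ :=
        by simpa [sub_eq_add_neg] using norm_add_le (Complex.exp z) (-Complex.exp (-z))
    _ = Real.exp z.re + Real.exp (-z.re) := by simp [Complex.norm_exp]

lemma sinh_le_abs_sinh (z : ℂ) : Real.sinh z.re ≤ ‖Complex.sinh z‖ := by
  have h : Complex.sinh z = (Complex.exp z - Complex.exp (-z)) / 2 := by rw [Complex.sinh]
  rw [h, norm_div]
  simp only [Complex.norm_two]
  rw [Real.sinh_eq]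
  gcongr
  calc Real.exp z.re - Real.exp (-z.re)
      = ‖Complex.exp z‖ - ‖Complex.exp (-z)‖ := by simp [Complex.norm_exp]
    _ ≤ ‖Complex.exp z - Complex.exp (-z)‖ :=
        norm_sub_norm_le _ _

lemma alg1 (a b : ℝ) (ha : 0 < a) (hb : 0 < b) :
    ((b - b⁻¹)/2) * ((a - a⁻¹)/2) / ((a*b + (a*b)⁻¹)/2)
      = (1 - a⁻¹*a⁻¹ - b⁻¹*b⁻¹ + (a*b)⁻¹*(a*b)⁻¹)/(2*(1+(a*b)⁻¹*(a*b)⁻¹)) := by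
  have h1 : a*b + (a*b)⁻¹ ≠ 0 := by positivity
  have h2 : (1:ℝ) + (a*b)⁻¹*(a*b)⁻¹ ≠ 0 := by positivity
  field_simp
  ring

lemma alg2 (a b : ℝ) (ha : 0 < a) (hb : 0 < b) (hab : 1 < a*b) :
    ((b + b⁻¹)/2) * ((a + a⁻¹)/2) / ((a*b - (a*b)⁻¹)/2)
      = (1 + a⁻¹*a⁻¹ + b⁻¹*b⁻¹ + (a*b)⁻¹*(a*b)⁻¹)/(2*(1-(a*b)⁻¹*(a*b)⁻¹)) := by
  have hab0 : (0:ℝ) < a*b := by positivity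
  have h1 : a*b - (a*b)⁻¹ ≠ 0 := by
    have : (a*b)⁻¹ < 1 := by rw [inv_lt_one_iff₀]; right; exact hab
    nlinarith
  have h2 : (1:ℝ) - (a*b)⁻¹*(a*b)⁻¹ ≠ 0 := by
    have : (a*b)⁻¹ < 1 := by rw [inv_lt_one_iff₀]; right; exact hab
    have h0 : (0:ℝ) < (a*b)⁻¹ := by positivity
    nlinarith
  have h1' : (a*b - (a*b)⁻¹)/2 ≠ 0 := by
    simpa using h1
  have h2' : (2:ℝ)*(1-(a*b)⁻¹*(a*b)⁻¹) ≠ 0 := by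
    simpa using h2
  rw [div_eq_div_iff h1' h2']
  field_simp
  ring

lemma lraw_eq (x r : ℝ) :
    Real.sinh (r*(1-x)) * Real.sinh (r*x) / Real.cosh r
      = (1 - Real.exp (-(2*(r*x))) - Real.exp (-(2*(r*(1-x)))) + Real.exp (-(2*r)))
        / (2*(1 + Real.exp (-(2*r)))) := by
  rw [Real.sinh_eq, Real.sinh_eq, Real.cosh_eq]
  have hab : Real.exp r = Real.exp (r*x) * Real.exp (r*(1-x)) := by
    rw [← Real.exp_add, show r*x + r*(1-x) = r by ring]
  have h1 : Real.exp (-(2*(r*x))) = Real.exp (-(r*x)) * Real.exp (-(r*x)) := by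
    rw [← Real.exp_add]; ring_nf
  have h2 : Real.exp (-(2*(r*(1-x)))) = Real.exp (-(r*(1-x))) * Real.exp (-(r*(1-x))) := by
    rw [← Real.exp_add]; ring_nf
  have h3 : Real.exp (-(2*r)) = Real.exp (-r) * Real.exp (-r) := by
    rw [← Real.exp_add]; ring_nf
  rw [h1, h2, h3, Real.exp_neg (r*x), Real.exp_neg (r*(1-x)), Real.exp_neg r, hab]
  exact alg1 _ _ (Real.exp_pos _) (Real.exp_pos _)

lemma uraw_eq (x r : ℝ) (hr : 0 < r) :
    Real.cosh (r*(1-x)) * Real.cosh (r*x) / Real.sinh r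
      = (1 + Real.exp (-(2*(r*x))) + Real.exp (-(2*(r*(1-x)))) + Real.exp (-(2*r)))
        / (2*(1 - Real.exp (-(2*r)))) := by
  rw [Real.cosh_eq, Real.cosh_eq, Real.sinh_eq]
  have hab : Real.exp r = Real.exp (r*x) * Real.exp (r*(1-x)) := by
    rw [← Real.exp_add, show r*x + r*(1-x) = r by ring]
  have h1 : Real.exp (-(2*(r*x))) = Real.exp (-(r*x)) * Real.exp (-(r*x)) := by
    rw [← Real.exp_add]; ring_nf
  have h2 : Real.exp (-(2*(r*(1-x)))) = Real.exp (-(r*(1-x))) * Real.exp (-(r*(1-x))) := by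
    rw [← Real.exp_add]; ring_nf
  have h3 : Real.exp (-(2*r)) = Real.exp (-r) * Real.exp (-r) := by
    rw [← Real.exp_add]; ring_nf
  rw [h1, h2, h3, Real.exp_neg (r*x), Real.exp_neg (r*(1-x)), Real.exp_neg r, hab]
  refine alg2 _ _ (Real.exp_pos _) (Real.exp_pos _) ?_
  rw [← hab]
  exact Real.one_lt_exp_iff.mpr hr

lemma exp_neg_mul_tendsto (c : ℝ) (hc : 0 < c) :
    Tendsto (fun r : ℝ => Real.exp (-(2*(r*c)))) atTop (𝓝 0) := by
  apply Real.tendsto_exp_atBot.comp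
  apply tendsto_neg_atBot_iff.mpr
  exact (tendsto_id.atTop_mul_const hc).const_mul_atTop (by norm_num : (0:ℝ) < 2)

lemma tendsto_llow (x : ℝ) (hx0 : 0 < x) (hx1 : x < 1) :
    Tendsto (fun r => (1 - Real.exp (-(2*(r*x))) - Real.exp (-(2*(r*(1-x)))) + Real.exp (-(2*r)))
      /(2*(1+Real.exp (-(2*r))))) atTop (𝓝 (1/2)) := by
  have h1 := exp_neg_mul_tendsto x hx0
  have h2 := exp_neg_mul_tendsto (1-x) (by linarith)
  have h3 : Tendsto (fun r : ℝ => Real.exp (-(2*r))) atTop (𝓝 0) := by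
    simpa using exp_neg_mul_tendsto 1 one_pos
  have h := ((((tendsto_const_nhds : Filter.Tendsto (fun _ : ℝ => (1:ℝ)) atTop (𝓝 1)).sub h1).sub h2).add h3).div
    (((tendsto_const_nhds : Filter.Tendsto (fun _ : ℝ => (1:ℝ)) atTop (𝓝 1)).add h3).const_mul 2)
    (by norm_num : (2:ℝ)*(1+0) ≠ 0)
  norm_num at h
  convert h using 2
  rfl

lemma tendsto_uup (x : ℝ) (hx0 : 0 < x) (hx1 : x < 1) :
    Tendsto (fun r => (1 + Real.exp (-(2*(r*x))) + Real.exp (-(2*(r*(1-x)))) + Real.exp (-(2*r)))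
      /(2*(1-Real.exp (-(2*r))))) atTop (𝓝 (1/2)) := by
  have h1 := exp_neg_mul_tendsto x hx0
  have h2 := exp_neg_mul_tendsto (1-x) (by linarith)
  have h3 : Tendsto (fun r : ℝ => Real.exp (-(2*r))) atTop (𝓝 0) := by
    simpa using exp_neg_mul_tendsto 1 one_pos
  have h := ((((tendsto_const_nhds : Filter.Tendsto (fun _ : ℝ => (1:ℝ)) atTop (𝓝 1)).add h1).add h2).add h3).div
    (((tendsto_const_nhds : Filter.Tendsto (fun _ : ℝ => (1:ℝ)) atTop (𝓝 1)).sub h3).const_mul 2)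
    (by norm_num : (2:ℝ)*(1-0) ≠ 0)
  norm_num at h
  convert h using 2
  rfl

/-- For every `x ∈ (0,1)`,
`lim_{|s| → ∞} √|s| · |g(√(is),x,x)| = 1/2`: for every `ε > 0` there exists `M > 0`
such that for all real `s` with `|s| > M`,
`| √|s| · |g(√(is),x,x)| − 1/2 | < ε`. -/
theorem gC_abs_diagonal_limit (x : ℝ) (hx : x ∈ Set.Ioo (0 : ℝ) 1) :
    ∀ ε > (0 : ℝ), ∃ M > (0 : ℝ), ∀ s : ℝ, M < |s| →
      |Real.sqrt |s| * ‖gC (sqrtis s) x x‖ - 1 / 2| < ε := by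
  obtain ⟨hx0, hx1⟩ := hx
  intro ε hε
  have hL := tendsto_llow x hx0 hx1
  have hU := tendsto_uup x hx0 hx1
  rw [Metric.tendsto_atTop] at hL hU
  obtain ⟨R1, hR1⟩ := hL ε hε
  obtain ⟨R2, hR2⟩ := hU ε hε
  set R : ℝ := max 1 (max R1 R2) with hRdef
  have hR1' : (1:ℝ) ≤ R := le_max_left _ _
  have hRpos : (0:ℝ) < R := lt_of_lt_of_le one_pos hR1'
  refine ⟨2*R^2, by positivity, ?_⟩
  intro s hs
  set t : ℝ := Real.sqrt |s| with htdef
  set r : ℝ := t / Real.sqrt 2 with hrdef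
  have h2 : (0:ℝ) < Real.sqrt 2 := by positivity
  have htR : Real.sqrt 2 * R < t := by
    have h1 : Real.sqrt (2*R^2) < Real.sqrt |s| := Real.sqrt_lt_sqrt (by positivity) hs
    rwa [Real.sqrt_mul (by norm_num : (0:ℝ) ≤ 2), Real.sqrt_sq hRpos.le] at h1
  have hrR : R < r := by
    rw [hrdef, lt_div_iff₀ h2]
    nlinarith
  have hr0 : (0:ℝ) < r := lt_trans hRpos hrR
  have ht0 : (0:ℝ) < t := by nlinarith
  set m : ℂ := sqrtis s with hmdef
  have hm : m = ((r:ℝ):ℂ) * (1 + Complex.I) := by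
    rw [hmdef, sqrtis, hrdef, htdef]
    push_cast
    ring
  have hmre : m.re = r := by rw [hm]; simp
  have habs1I : ‖1 + Complex.I‖ = Real.sqrt 2 := by
    rw [Complex.norm_def]
    simp [Complex.normSq_apply]
    norm_num
  have habs : ‖m‖ = t := by
    rw [hm, norm_mul, habs1I, Complex.norm_real, Real.norm_eq_abs, abs_of_pos hr0, hrdef]
    field_simp
  have hm0 : m ≠ 0 := by
    intro h
    rw [h] at habs
    simp at habs
    linarith
  have hCpos : (0:ℝ) < ‖Complex.sinh m‖ := by
    have h := sinh_le_abs_sinh m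
    rw [hmre] at h
    exact lt_of_lt_of_le (Real.sinh_pos_iff.mpr hr0) h
  have hsinh0 : Complex.sinh m ≠ 0 := by
    intro h
    rw [h] at hCpos
    simp at hCpos
  -- value of gC
  have hg : gC m x x = -(Complex.sinh (m * ((x:ℂ)-1)) * Complex.sinh (m * (x:ℂ))) / (m * Complex.sinh m) := by
    rw [gC, if_neg hm0, if_pos le_rfl]
  -- A, B, C
  set A : ℝ := ‖Complex.sinh (m * (((1-x:ℝ)):ℂ))‖ with hAdef
  set B : ℝ := ‖Complex.sinh (m * ((x:ℝ):ℂ))‖ with hBdef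
  set C : ℝ := ‖Complex.sinh m‖ with hCdef
  have hAeq : ‖Complex.sinh (m * ((x:ℂ)-1))‖ = A := by
    rw [hAdef]
    have : m * ((x:ℂ)-1) = -(m * (((1-x:ℝ)):ℂ)) := by push_cast; ring
    rw [this, Complex.sinh_neg, norm_neg]
  have habsg : t * ‖gC m x x‖ = A * B / C := by
    rw [hg, norm_div, norm_mul, norm_neg, norm_mul, habs, hAeq]
    rw [← hBdef, ← hCdef]
    field_simp
  have hmim : m.im = r := by rw [hm]; simp
  have hre : ∀ c : ℝ, (m * ((c:ℝ):ℂ)).re = r * c := by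
    intro c
    rw [Complex.mul_re, hmre, hmim]
    simp
  have hA_low : Real.sinh (r*(1-x)) ≤ A := by
    have h := sinh_le_abs_sinh (m * (((1-x:ℝ)):ℂ))
    rwa [hre (1-x)] at h
  have hA_up : A ≤ Real.cosh (r*(1-x)) := by
    have h := abs_sinh_le_cosh (m * (((1-x:ℝ)):ℂ))
    rwa [hre (1-x)] at h
  have hB_low : Real.sinh (r*x) ≤ B := by
    have h := sinh_le_abs_sinh (m * ((x:ℝ):ℂ))
    rwa [hre x] at h
  have hB_up : B ≤ Real.cosh (r*x) := by
    have h := abs_sinh_le_cosh (m * ((x:ℝ):ℂ))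
    rwa [hre x] at h
  have hC_low : Real.sinh r ≤ C := by
    have h := sinh_le_abs_sinh m
    rwa [hmre] at h
  have hC_up : C ≤ Real.cosh r := by
    have h := abs_sinh_le_cosh m
    rwa [hmre] at h
  have hsx : 0 ≤ Real.sinh (r*x) := Real.sinh_nonneg_iff.mpr (by positivity)
  have hA0 : 0 ≤ A := norm_nonneg _
  have hB0 : 0 ≤ B := norm_nonneg _
  have hlow : Real.sinh (r*(1-x)) * Real.sinh (r*x) / Real.cosh r ≤ A*B/C :=
    div_le_div₀ (mul_nonneg hA0 hB0)
      (mul_le_mul hA_low hB_low hsx hA0) hCpos hC_up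
  have hup : A*B/C ≤ Real.cosh (r*(1-x)) * Real.cosh (r*x) / Real.sinh r :=
    div_le_div₀ (by positivity)
      (mul_le_mul hA_up hB_up hB0 (Real.cosh_pos _).le) (Real.sinh_pos_iff.mpr hr0) hC_low
  have e1 := lraw_eq x r
  have e2 := uraw_eq x r hr0
  have hrge1 : R1 ≤ r :=
    le_trans (le_trans (le_max_left R1 R2) (le_max_right 1 _)) hrR.le
  have hrge2 : R2 ≤ r :=
    le_trans (le_trans (le_max_right R1 R2) (le_max_right 1 _)) hrR.le
  have d1 := hR1 r hrge1
  have d2 := hR2 r hrge2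
  rw [Real.dist_eq, ← e1] at d1
  rw [Real.dist_eq, ← e2] at d2
  rw [habsg, abs_lt]
  rw [abs_lt] at d1 d2
  constructor <;> linarith [hlow, hup, d1.1, d1.2, d2.1, d2.2]
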